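/- Let p be a prime and E ⊂ ℚ_p a uniformly discrete set containing at least two points, and let n_E = max over distinct λ, λ' ∈ E of v_p(λ - λ'). Then the open set of zeros of the distribution μ_E^ is contained in the ball B(0, p^{n_E + 1}); in particular it is bounded. -/

import Mathlib

open MeasureTheory

noncomputable instance (p : ℕ) [Fact p.Prime] : MeasurableSpace ℚ_[p] := borel _
instance (p : ℕ) [Fact p.Prime] : BorelSpace ℚ_[p] := ⟨rfl⟩

/-- Haar measure on `ℚ_[p]`, normalized so that `ℤ_p` (the closed unit ball) has measure 1. -/
noncomputable def haarQp (p : ℕ) [Fact p.Prime] : Measure ℚ_[p] :=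
  Measure.addHaarMeasure
    ⟨⟨Metric.closedBall 0 1, isCompact_closedBall 0 1⟩,
      ⟨0, by
        rw [mem_interior_iff_mem_nhds]
        exact Metric.closedBall_mem_nhds 0 one_pos⟩⟩

/-- The standard additive character `χ(x) = e^{2πi {x}}` of `ℚ_[p]`, where `{x}` is the
p-adic fractional part of `x`. -/
noncomputable def stdChar (p : ℕ) [hp : Fact p.Prime] (x : ℚ_[p]) : ℂ :=
  let n : ℕ := (-x.valuation).toNat
  let y : ℤ_[p] := ⟨(p : ℚ_[p]) ^ n * x, by
    by_cases hx : x = 0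
    · simp [hx]
    · rw [norm_mul, norm_pow, Padic.norm_p, Padic.norm_eq_zpow_neg_valuation hx]
      have h1 : (1:ℝ) < p := by exact_mod_cast hp.out.one_lt
      have h0 : (0:ℝ) < p := by positivity
      rw [inv_pow, ← zpow_natCast, ← zpow_neg, ← zpow_add₀ (ne_of_gt h0)]
      apply zpow_le_one_of_nonpos₀ h1.le
      have h2 : -x.valuation ≤ ((-x.valuation).toNat : ℤ) := Int.self_le_toNat _
      omega⟩
  Complex.exp (2 * Real.pi * Complex.I * ((y.appr n : ℂ) / (p : ℂ) ^ n))

/-- `ξ` is a zero of the Bruhat–Schwartz distribution `μ̂_E` (the Fourier transform of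
`μ_E = ∑_{λ∈E} δ_λ`): there is `n₀` such that the pairing of `μ̂_E` against the indicator
of every ball `B(y, p^n)` with `y ∈ B(ξ, p^{n₀})` and `n ≤ n₀` vanishes; by the pairing
formula this means that the character sums `∑_{λ ∈ E ∩ B(0,p^{-n})} χ(yλ)⁻¹` vanish. -/
def IsZeroOfFourierMu (p : ℕ) [Fact p.Prime] (E : Set ℚ_[p]) (ξ : ℚ_[p]) : Prop :=
  ∃ n₀ : ℤ, ∀ y : ℚ_[p], ‖y - ξ‖ ≤ (p : ℝ) ^ n₀ → ∀ n : ℤ, n ≤ n₀ →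
    ∑' l : ↥(E ∩ {x : ℚ_[p] | ‖x‖ ≤ (p : ℝ) ^ (-n)}), (stdChar p (y * l))⁻¹ = 0


section StdCharLemmas
open Finset Polynomial


lemma sum_range_mul_add {β : Type*} [AddCommMonoid β] (F : ℕ → β) (P k : ℕ) :
    ∑ a ∈ Finset.range (P * k), F a
      = ∑ q ∈ Finset.range P, ∑ r ∈ Finset.range k, F (q * k + r) := by
  induction P with
  | zero => simp
  | succ P ih =>
      have h1 : (P + 1) * k = P * k + k := by ring
      have hdisj : Disjoint (Finset.range (P * k)) ((Finset.range k).map (addLeftEmbedding (P*k))) := by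
        rw [Finset.disjoint_right]
        intro a ha ha'
        simp only [Finset.mem_map, Finset.mem_range] at ha ha'
        obtain ⟨b, hb, rfl⟩ := ha
        simp [addLeftEmbedding] at ha' hb
      rw [h1, Finset.range_add, Finset.sum_union hdisj, Finset.sum_map, ih, Finset.sum_range_succ]
      simp [addLeftEmbedding]

variable {p : ℕ} [hp : Fact p.Prime]

lemma zeta_linIndep (M : ℕ) (hM : 1 ≤ M) (g : ℕ → ℤ)
    (hg : ∑ j ∈ Finset.range ((p^M).totient), (g j : ℂ) *
      Complex.exp (2 * Real.pi * Complex.I / (p^M : ℕ)) ^ j = 0) :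
    ∀ j < (p^M).totient, g j = 0 := by
  set ζ : ℂ := Complex.exp (2 * Real.pi * Complex.I / (p^M : ℕ)) with hζdef
  set D : ℕ := (p^M).totient with hD
  have hNpos : 0 < p^M := pow_pos hp.out.pos M
  have hζ : IsPrimitiveRoot ζ (p^M) := Complex.isPrimitiveRoot_exp _ hNpos.ne'
  by_contra hcon
  push_neg at hcon
  obtain ⟨j₀, hj₀D, hj₀⟩ := hcon
  set P : ℚ[X] := ∑ j ∈ Finset.range D, Polynomial.C ((g j : ℚ)) * Polynomial.X ^ j with hP
  have hPeval : Polynomial.aeval ζ P = 0 := by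
    rw [hP, map_sum]
    rw [← hg]
    apply Finset.sum_congr rfl
    intro j _
    simp [Polynomial.aeval_C]
  have hPcoeff : ∀ j < D, P.coeff j = (g j : ℚ) := by
    intro j hj
    rw [hP, Polynomial.finset_sum_coeff]
    rw [Finset.sum_eq_single j]
    · simp
    · intro b _ hbj
      rw [Polynomial.coeff_C_mul, Polynomial.coeff_X_pow, if_neg (by omega)]
      simp
    · intro hj'
      exact absurd (Finset.mem_range.mpr hj) (fun h => hj' h)
  have hP0 : P ≠ 0 := by
    intro h
    apply hj₀
    have := hPcoeff j₀ hj₀D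
    rw [h] at this
    simpa using this.symm
  have hdvd : minpoly ℚ ζ ∣ P := minpoly.dvd ℚ ζ hPeval
  have hmin : (minpoly ℚ ζ).natDegree = D := by
    rw [← Polynomial.cyclotomic_eq_minpoly_rat hζ hNpos, Polynomial.natDegree_cyclotomic]
  have hdeg : P.natDegree < D := by
    have h1 : P.natDegree ≤ D - 1 := by
      rw [hP]
      apply Polynomial.natDegree_sum_le_of_forall_le
      intro j hj
      refine le_trans (Polynomial.natDegree_C_mul_le _ _) ?_
      rw [Polynomial.natDegree_X_pow]
      have := Finset.mem_range.mp hj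
      omega
    have hDpos : 0 < D := Nat.totient_pos.mpr hNpos
    omega
  have := Polynomial.natDegree_le_of_dvd hdvd hP0
  omega

lemma count_shift (M : ℕ) (hM : 1 ≤ M) (c : ℕ → ℕ)
    (hsum : ∑ a ∈ Finset.range (p^M), (c a : ℂ) *
      Complex.exp (2 * Real.pi * Complex.I / (p^M : ℕ)) ^ a = 0) :
    ∀ q < p, ∀ q' < p, ∀ r < p^(M-1),
      c (q * p^(M-1) + r) = c (q' * p^(M-1) + r) := by
  set ζ : ℂ := Complex.exp (2 * Real.pi * Complex.I / (p^M : ℕ)) with hζdef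
  set k : ℕ := p^(M-1) with hk
  have hppos : 0 < p := hp.out.pos
  have hp2 : 2 ≤ p := hp.out.two_le
  have hkpos : 0 < k := pow_pos hppos _
  have hNpos : 0 < p^M := pow_pos hppos M
  have hN : p^M = p * k := by
    rw [hk, ← pow_succ']
    congr 1
    omega
  have hζ : IsPrimitiveRoot ζ (p^M) := Complex.isPrimitiveRoot_exp _ hNpos.ne'
  -- the sum of powers of η = ζ^k over q < p vanishes
  set η : ℂ := ζ^k with hη
  have hηp : η^p = 1 := by
    rw [hη, ← pow_mul]
    have : k * p = p^M := by rw [hN]; ring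
    rw [this, hζ.pow_eq_one]
  have hη1 : η ≠ 1 := by
    rw [hη]
    apply hζ.pow_ne_one_of_pos_of_lt hkpos.ne'
    rw [hN]
    calc k = 1 * k := (one_mul k).symm
      _ < p * k := by
          exact mul_lt_mul_of_pos_right (by omega) hkpos
  have hgeom : ∑ q ∈ Finset.range p, η^q = 0 := by
    rw [geom_sum_eq hη1, hηp]
    simp
  -- rewrite hsum in (q, r) coordinates
  rw [hN, mul_comm p k, mul_comm k p, sum_range_mul_add] at hsum
  have hzkr : ∀ q r : ℕ, ζ^(q*k+r) = η^q * ζ^r := by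
    intro q r
    rw [pow_add, mul_comm q k, pow_mul, hη]
  have hsub : ∑ q ∈ Finset.range p, ∑ r ∈ Finset.range k,
      ((c ((p-1)*k + r) : ℂ)) * ζ^(q*k+r) = 0 := by
    have : ∀ q ∈ Finset.range p, ∑ r ∈ Finset.range k,
        ((c ((p-1)*k + r) : ℂ)) * ζ^(q*k+r)
        = η^q * ∑ r ∈ Finset.range k, ((c ((p-1)*k + r) : ℂ)) * ζ^r := by
      intro q _
      rw [Finset.mul_sum]
      apply Finset.sum_congr rfl
      intro r _
      rw [hzkr]
      ring
    rw [Finset.sum_congr rfl this, ← Finset.sum_mul, hgeom, zero_mul]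
  have hdiff : ∑ q ∈ Finset.range p, ∑ r ∈ Finset.range k,
      (((c (q*k + r) : ℤ) - (c ((p-1)*k + r) : ℤ) : ℤ) : ℂ) * ζ^(q*k+r) = 0 := by
    have := sub_eq_zero.mpr (hsum.trans hsub.symm)
    rw [← Finset.sum_sub_distrib] at this
    rw [← this]
    apply Finset.sum_congr rfl
    intro q _
    rw [← Finset.sum_sub_distrib]
    apply Finset.sum_congr rfl
    intro r _
    push_cast
    ring
  -- drop the q = p-1 term
  have hdiff' : ∑ q ∈ Finset.range (p-1), ∑ r ∈ Finset.range k,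
      (((c (q*k + r) : ℤ) - (c ((p-1)*k + r) : ℤ) : ℤ) : ℂ) * ζ^(q*k+r) = 0 := by
    have hps : p = (p-1) + 1 := by omega
    rw [hps, Finset.sum_range_succ] at hdiff
    simpa using hdiff
  -- linear independence
  set G : ℕ → ℤ := fun j => (c ((j/k)*k + j%k) : ℤ) - (c ((p-1)*k + j%k) : ℤ) with hG
  have hind : ∀ j < (p^M).totient, G j = 0 := by
    apply zeta_linIndep M hM
    have htot : (p^M).totient = (p-1) * k := by
      rw [Nat.totient_prime_pow hp.out hM, hk]
      ring
    rw [htot, sum_range_mul_add (fun a => (G a : ℂ) * ζ^a)]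
    rw [← hdiff']
    apply Finset.sum_congr rfl
    intro q hq
    apply Finset.sum_congr rfl
    intro r hr
    have hr' : r < k := Finset.mem_range.mp hr
    have hdiv : (q*k+r)/k = q := by
      rw [show q*k+r = r + k*q by ring, Nat.add_mul_div_left _ _ hkpos,
        Nat.div_eq_of_lt hr', zero_add]
    have hmod : (q*k+r)%k = r := by
      rw [show q*k+r = r + k*q by ring, Nat.add_mul_mod_self_left, Nat.mod_eq_of_lt hr']
    rw [hG]
    simp only []
    rw [hdiv, hmod]
  have key : ∀ q < p, ∀ r < k, c (q*k + r) = c ((p-1)*k + r) := by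
    intro q hq r hr
    rcases Nat.lt_or_ge q (p-1) with h | h
    · have hj : q*k + r < (p^M).totient := by
        rw [Nat.totient_prime_pow hp.out hM]
        have : q*k + r < (p-1)*k := by
          calc q*k + r < q*k + k := by omega
            _ = (q+1)*k := by ring
            _ ≤ (p-1)*k := Nat.mul_le_mul_right k (by omega)
        calc q*k+r < (p-1)*k := this
          _ = p^(M-1)*(p-1) := by rw [hk]; ring
      have := hind _ hj
      rw [hG] at this
      simp only [] at this
      have hdiv : (q*k+r)/k = q := by
        rw [show q*k+r = r + k*q by ring, Nat.add_mul_div_left _ _ hkpos,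
          Nat.div_eq_of_lt hr, zero_add]
      have hmod : (q*k+r)%k = r := by
        rw [show q*k+r = r + k*q by ring, Nat.add_mul_mod_self_left, Nat.mod_eq_of_lt hr]
      rw [hdiv, hmod] at this
      omega
    · have : q = p - 1 := by omega
      rw [this]
  intro q hq q' hq' r hr
  rw [key q hq r hr, key q' hq' r hr]

section
variable {p : ℕ} [hp : Fact p.Prime]


lemma exp_q_eq (a b : ℤ) (n m : ℕ)
    (h : ‖(a : ℚ_[p]) / (p:ℚ_[p])^n - (b : ℚ_[p]) / (p:ℚ_[p])^m‖ ≤ 1) :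
    Complex.exp (2 * Real.pi * Complex.I * ((a : ℂ) / (p:ℂ)^n)) =
    Complex.exp (2 * Real.pi * Complex.I * ((b : ℂ) / (p:ℂ)^m)) := by
  have hp0 : (p : ℚ_[p]) ≠ 0 := Nat.cast_ne_zero.mpr hp.out.ne_zero
  have hpc : (p : ℂ) ≠ 0 := Nat.cast_ne_zero.mpr hp.out.ne_zero
  have key : ((a * p^m - b * p^n : ℤ) : ℚ_[p]) = ((a:ℚ_[p]) / (p:ℚ_[p])^n - (b:ℚ_[p]) / (p:ℚ_[p])^m) * (p:ℚ_[p])^(n+m) := by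
    field_simp
    push_cast
    ring
  have hnorm : ‖((a * p^m - b * p^n : ℤ) : ℚ_[p])‖ ≤ (p:ℝ) ^ (-(n+m) : ℤ) := by
    rw [key, norm_mul]
    calc ‖(a:ℚ_[p]) / (p:ℚ_[p])^n - (b:ℚ_[p]) / (p:ℚ_[p])^m‖ * ‖(p:ℚ_[p])^(n+m)‖
        ≤ 1 * ‖(p:ℚ_[p])^(n+m)‖ := by
          exact mul_le_mul_of_nonneg_right h (norm_nonneg _)
      _ = (p:ℝ) ^ (-(n+m) : ℤ) := by
          rw [one_mul, Padic.norm_p_pow]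
          norm_num
  obtain ⟨k, hk⟩ := (Padic.norm_int_le_pow_iff_dvd _ _).mp hnorm
  rw [Complex.exp_eq_exp_iff_exists_int]
  refine ⟨k, ?_⟩
  have hkc : (a : ℂ) * (p:ℂ)^m - (b:ℂ) * (p:ℂ)^n = (p:ℂ)^(n+m) * k := by
    have := congrArg (Int.cast : ℤ → ℂ) hk
    push_cast at this ⊢
    linear_combination this
  field_simp
  push_cast
  ring_nf
  ring_nf at hkc
  linear_combination hkc

lemma stdChar_eq_exp {x : ℚ_[p]} {a : ℤ} {n : ℕ}
    (h : ‖x - (a : ℚ_[p]) / (p:ℚ_[p])^n‖ ≤ 1) :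
    stdChar p x = Complex.exp (2 * Real.pi * Complex.I * ((a : ℂ) / (p:ℂ)^n)) := by
  unfold stdChar
  set n₀ : ℕ := (-x.valuation).toNat with hn₀
  set y : ℤ_[p] := ⟨(p : ℚ_[p]) ^ n₀ * x, by
    by_cases hx : x = 0
    · simp [hx]
    · rw [norm_mul, norm_pow, Padic.norm_p, Padic.norm_eq_zpow_neg_valuation hx]
      have h1 : (1:ℝ) < p := by exact_mod_cast hp.out.one_lt
      have h0 : (0:ℝ) < p := by positivity
      rw [inv_pow, ← zpow_natCast, ← zpow_neg, ← zpow_add₀ (ne_of_gt h0)]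
      apply zpow_le_one_of_nonpos₀ h1.le
      have h2 : -x.valuation ≤ ((-x.valuation).toNat : ℤ) := Int.self_le_toNat _
      omega⟩ with hy
  have happr : ‖x - ((y.appr n₀ : ℤ) : ℚ_[p]) / (p:ℚ_[p])^n₀‖ ≤ 1 := by
    have hspec := PadicInt.appr_spec n₀ y
    rw [← PadicInt.norm_le_pow_iff_mem_span_pow] at hspec
    have h1 : ‖((y : ℚ_[p]) - (y.appr n₀ : ℚ_[p]))‖ ≤ (p:ℝ)^(-n₀ : ℤ) := by
      exact_mod_cast hspec
    have hyv : (y : ℚ_[p]) = (p : ℚ_[p]) ^ n₀ * x := rfl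
    have hpn : ((p:ℚ_[p])^n₀) ≠ 0 := pow_ne_zero _ (Nat.cast_ne_zero.mpr hp.out.ne_zero)
    have : x - ((y.appr n₀ : ℤ) : ℚ_[p]) / (p:ℚ_[p])^n₀ = ((y:ℚ_[p]) - (y.appr n₀ : ℚ_[p])) / (p:ℚ_[p])^n₀ := by
      rw [hyv]; field_simp; push_cast; ring
    rw [this, norm_div]
    rw [Padic.norm_p_pow]
    have hppos : (0:ℝ) < p := by exact_mod_cast hp.out.pos
    rw [div_le_one (by positivity)]
    exact h1
  have := exp_q_eq (p := p) (y.appr n₀ : ℤ) a n₀ n (by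
    calc ‖((y.appr n₀ : ℤ) : ℚ_[p]) / (p:ℚ_[p])^n₀ - (a : ℚ_[p]) / (p:ℚ_[p])^n‖
        = ‖(((y.appr n₀ : ℤ) : ℚ_[p]) / (p:ℚ_[p])^n₀ - x) + (x - (a : ℚ_[p]) / (p:ℚ_[p])^n)‖ := by ring_nf
      _ ≤ max ‖((y.appr n₀ : ℤ) : ℚ_[p]) / (p:ℚ_[p])^n₀ - x‖ ‖x - (a : ℚ_[p]) / (p:ℚ_[p])^n‖ := Padic.nonarchimedean _ _
      _ ≤ 1 := by
          rw [max_le_iff]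
          constructor
          · rw [norm_sub_rev]; exact happr
          · exact h)
  simpa using this

lemma approx_aux (x : ℚ_[p]) (n : ℕ) (hx : ‖x‖ ≤ (p:ℝ)^(n:ℤ)) :
    ∃ a : ℤ, ‖x - (a:ℚ_[p])/(p:ℚ_[p])^n‖ ≤ 1 := by
  have hmem : ‖(p : ℚ_[p]) ^ n * x‖ ≤ 1 := by
    rw [norm_mul, Padic.norm_p_pow]
    have hppos : (0:ℝ) < p := by exact_mod_cast hp.out.pos
    calc (p:ℝ)^(-n:ℤ) * ‖x‖ ≤ (p:ℝ)^(-n:ℤ) * (p:ℝ)^(n:ℤ) := by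
          exact mul_le_mul_of_nonneg_left hx (by positivity)
      _ = 1 := by rw [← zpow_add₀ (ne_of_gt hppos)]; norm_num
  set y : ℤ_[p] := ⟨(p : ℚ_[p]) ^ n * x, hmem⟩ with hy
  refine ⟨(y.appr n : ℤ), ?_⟩
  have hspec := PadicInt.appr_spec n y
  rw [← PadicInt.norm_le_pow_iff_mem_span_pow] at hspec
  have h1 : ‖((y : ℚ_[p]) - (y.appr n : ℚ_[p]))‖ ≤ (p:ℝ)^(-n : ℤ) := by
    exact_mod_cast hspec
  have hpn : ((p:ℚ_[p])^n) ≠ 0 := pow_ne_zero _ (Nat.cast_ne_zero.mpr hp.out.ne_zero)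
  have heq : x - (((y.appr n : ℤ)):ℚ_[p]) / (p:ℚ_[p])^n = ((y:ℚ_[p]) - (y.appr n : ℚ_[p])) / (p:ℚ_[p])^n := by
    have hyv : (y : ℚ_[p]) = (p : ℚ_[p]) ^ n * x := rfl
    rw [hyv]; field_simp; push_cast; ring
  rw [heq, norm_div, Padic.norm_p_pow]
  have hppos : (0:ℝ) < p := by exact_mod_cast hp.out.pos
  rw [div_le_one (by positivity)]
  exact h1

lemma exists_approx (x : ℚ_[p]) : ∃ (a : ℤ) (n : ℕ), ‖x - (a:ℚ_[p])/(p:ℚ_[p])^n‖ ≤ 1 := by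
  by_cases hx : x = 0
  · exact ⟨0, 0, by simp [hx]⟩
  · have h1 : (1:ℝ) < p := by exact_mod_cast hp.out.one_lt
    set n : ℕ := (-x.valuation).toNat with hn
    have hx' : ‖x‖ ≤ (p:ℝ)^(n:ℤ) := by
      rw [Padic.norm_eq_zpow_neg_valuation hx]
      apply zpow_le_zpow_right₀ h1.le
      have := Int.self_le_toNat (-x.valuation)
      omega
    obtain ⟨a, ha⟩ := approx_aux x n hx'
    exact ⟨a, n, ha⟩

lemma stdChar_ne_zero (x : ℚ_[p]) : stdChar p x ≠ 0 := by
  obtain ⟨a, n, h⟩ := exists_approx x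
  rw [stdChar_eq_exp h]
  exact Complex.exp_ne_zero _

lemma stdChar_add (x y : ℚ_[p]) : stdChar p (x + y) = stdChar p x * stdChar p y := by
  obtain ⟨a, n, ha⟩ := exists_approx x
  obtain ⟨b, m, hb⟩ := exists_approx y
  have hpn : ((p:ℚ_[p])^n) ≠ 0 := pow_ne_zero _ (Nat.cast_ne_zero.mpr hp.out.ne_zero)
  have hpm : ((p:ℚ_[p])^m) ≠ 0 := pow_ne_zero _ (Nat.cast_ne_zero.mpr hp.out.ne_zero)
  have hsum : ‖(x + y) - ((a * p^m + b * p^n : ℤ):ℚ_[p]) / (p:ℚ_[p])^(n+m)‖ ≤ 1 := by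
    have hsplit : ((a * p^m + b * p^n : ℤ):ℚ_[p]) / (p:ℚ_[p])^(n+m)
        = (a:ℚ_[p])/(p:ℚ_[p])^n + (b:ℚ_[p])/(p:ℚ_[p])^m := by
      push_cast
      rw [pow_add]
      field_simp
      try ring
    have heq : (x + y) - ((a * p^m + b * p^n : ℤ):ℚ_[p]) / (p:ℚ_[p])^(n+m)
        = (x - (a:ℚ_[p])/(p:ℚ_[p])^n) + (y - (b:ℚ_[p])/(p:ℚ_[p])^m) := by
      rw [hsplit]; ring
    rw [heq]
    calc ‖(x - (a:ℚ_[p])/(p:ℚ_[p])^n) + (y - (b:ℚ_[p])/(p:ℚ_[p])^m)‖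
        ≤ max ‖x - (a:ℚ_[p])/(p:ℚ_[p])^n‖ ‖y - (b:ℚ_[p])/(p:ℚ_[p])^m‖ := Padic.nonarchimedean _ _
      _ ≤ 1 := max_le ha hb
  rw [stdChar_eq_exp hsum, stdChar_eq_exp ha, stdChar_eq_exp hb, ← Complex.exp_add]
  congr 1
  have hpc : (p : ℂ) ≠ 0 := Nat.cast_ne_zero.mpr hp.out.ne_zero
  field_simp
  push_cast
  ring

lemma stdChar_zero : stdChar p (0 : ℚ_[p]) = 1 := by
  rw [stdChar_eq_exp (a := 0) (n := 0) (by simp)]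
  simp

lemma stdChar_eq_one_iff (x : ℚ_[p]) : stdChar p x = 1 ↔ ‖x‖ ≤ 1 := by
  constructor
  · intro h
    obtain ⟨a, n, ha⟩ := exists_approx x
    rw [stdChar_eq_exp ha, Complex.exp_eq_one_iff] at h
    obtain ⟨k, hk⟩ := h
    have hpc : (p : ℂ) ≠ 0 := Nat.cast_ne_zero.mpr hp.out.ne_zero
    have h2pi : (2 * (Real.pi:ℂ) * Complex.I) ≠ 0 := by
      simp [Real.pi_ne_zero, Complex.I_ne_zero]
    have h1 : (a:ℂ) / (p:ℂ)^n = (k:ℂ) := by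
      apply mul_left_cancel₀ h2pi
      rw [hk]; ring
    have hak : (a : ℂ) = k * (p:ℂ)^n := by
      rw [div_eq_iff (pow_ne_zero _ hpc)] at h1
      rw [h1]
    have haz : (a : ℤ) = k * (p:ℤ)^n := by
      exact_mod_cast hak
    have : ‖(a:ℚ_[p])/(p:ℚ_[p])^n‖ ≤ 1 := by
      rw [haz]
      push_cast
      have hpn : ((p:ℚ_[p])^n) ≠ 0 := pow_ne_zero _ (Nat.cast_ne_zero.mpr hp.out.ne_zero)
      rw [mul_div_assoc, div_self hpn, mul_one]
      exact Padic.norm_int_le_one k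
    calc ‖x‖ = ‖(x - (a:ℚ_[p])/(p:ℚ_[p])^n) + (a:ℚ_[p])/(p:ℚ_[p])^n‖ := by ring_nf
      _ ≤ max ‖x - (a:ℚ_[p])/(p:ℚ_[p])^n‖ ‖(a:ℚ_[p])/(p:ℚ_[p])^n‖ := Padic.nonarchimedean _ _
      _ ≤ 1 := max_le ha this
  · intro h
    rw [stdChar_eq_exp (a := 0) (n := 0) (by simpa using h)]
    simp

lemma stdChar_neg (x : ℚ_[p]) : stdChar p (-x) = (stdChar p x)⁻¹ := by
  have h := stdChar_add x (-x)
  simp only [add_neg_cancel, stdChar_zero] at h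
  exact (inv_eq_of_mul_eq_one_right h.symm).symm

lemma stdChar_nsmul (k : ℕ) (x : ℚ_[p]) : stdChar p ((k:ℚ_[p]) * x) = stdChar p x ^ k := by
  induction k with
  | zero => simp [stdChar_zero]
  | succ k ih =>
      have : ((k+1:ℕ):ℚ_[p]) * x = (k:ℚ_[p]) * x + x := by push_cast; ring
      rw [this, stdChar_add, ih, pow_succ]

lemma finite_sep_inter (E : Set ℚ_[p]) {ε : ℝ} (hε : 0 < ε)
    (sep : ∀ x ∈ E, ∀ y ∈ E, x ≠ y → ε ≤ ‖x - y‖) (R : ℝ) :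
    (E ∩ {x : ℚ_[p] | ‖x‖ ≤ R}).Finite := by
  set s := E ∩ {x : ℚ_[p] | ‖x‖ ≤ R} with hs
  have hpair : s.Pairwise fun x y => ε ≤ dist x y := by
    intro x hx y hy hxy
    rw [dist_eq_norm]
    exact sep x hx.1 y hy.1 hxy
  have hclosed : IsClosed s := Metric.isClosed_of_pairwise_le_dist hε hpair
  have hbounded : Bornology.IsBounded s := by
    apply Bornology.IsBounded.subset (Metric.isBounded_closedBall (x := (0:ℚ_[p])) (r := R))
    intro x hx
    simpa [Metric.mem_closedBall, dist_eq_norm] using hx.2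
  have hcompact : IsCompact s := Metric.isCompact_of_isClosed_isBounded hclosed hbounded
  have hdisc : DiscreteTopology s := by
    rw [discreteTopology_iff_isOpen_singleton]
    rintro ⟨x, hx⟩
    have hset : ({(⟨x, hx⟩ : s)} : Set s) = (Subtype.val) ⁻¹' (Metric.ball x ε) := by
      ext ⟨y, hy⟩
      simp only [Set.mem_singleton_iff, Set.mem_preimage, Metric.mem_ball, Subtype.mk.injEq]
      constructor
      · rintro rfl; simpa using hε
      · intro hdist
        by_contra hne
        have := sep y hy.1 x hx.1 hne
        rw [← dist_eq_norm] at this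
        exact absurd (lt_of_le_of_lt this hdist) (lt_irrefl _)
    rw [hset]
    exact (Metric.isOpen_ball).preimage continuous_subtype_val
  exact hcompact.finite (isDiscrete_iff_discreteTopology.mpr hdisc)

lemma stdChar_eq_zeta_pow (M : ℕ) (x : ℚ_[p]) (hx : ‖x‖ ≤ (p:ℝ)^(M:ℤ)) :
    ∃ a : ℕ, a < p^M ∧ stdChar p x
      = Complex.exp (2 * Real.pi * Complex.I / ((p^M : ℕ) : ℂ)) ^ a := by
  obtain ⟨b, hb⟩ := approx_aux x M hx
  have hNpos : 0 < (p:ℤ)^M := pow_pos (by exact_mod_cast hp.out.pos) M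
  set a : ℕ := (b % (p:ℤ)^M).toNat with ha
  have hblt : (b % (p:ℤ)^M) < (p:ℤ)^M := Int.emod_lt_of_pos b hNpos
  have hbnn : 0 ≤ b % (p:ℤ)^M := Int.emod_nonneg b hNpos.ne'
  refine ⟨a, ?_, ?_⟩
  · have : (a : ℤ) < (p:ℤ)^M := by rw [ha, Int.toNat_of_nonneg hbnn]; exact hblt
    exact_mod_cast this
  · rw [stdChar_eq_exp hb]
    have hpc : ((p:ℂ))^M ≠ 0 := pow_ne_zero _ (Nat.cast_ne_zero.mpr hp.out.ne_zero)
    have h1 : Complex.exp (2 * Real.pi * Complex.I / ((p^M : ℕ) : ℂ)) ^ a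
        = Complex.exp (2 * Real.pi * Complex.I * ((a : ℂ) / (p:ℂ)^M)) := by
      rw [← Complex.exp_nat_mul]
      congr 1
      push_cast
      field_simp
    rw [h1, Complex.exp_eq_exp_iff_exists_int]
    refine ⟨b / (p:ℤ)^M, ?_⟩
    have hdm : b = (p:ℤ)^M * (b / (p:ℤ)^M) + b % (p:ℤ)^M := (Int.mul_ediv_add_emod b _).symm
    have hac : (a : ℂ) = (b:ℂ) - ((p:ℂ))^M * ((b / (p:ℤ)^M : ℤ) : ℂ) := by
      have : (a : ℤ) = b - (p:ℤ)^M * (b / (p:ℤ)^M) := by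
        rw [ha, Int.toNat_of_nonneg hbnn]; omega
      exact_mod_cast congrArg (Int.cast : ℤ → ℂ) this
    field_simp
    rw [hac]
    push_cast
    ring

end
end StdCharLemmas

/-- For a uniformly discrete `E ⊂ ℚ_p` with at least two points and
`n_E = max_{λ ≠ λ' ∈ E} v_p(λ - λ')`, the set of zeros of `μ̂_E` is contained in the
ball `B(0, p^{n_E + 1})`; in particular it is bounded. -/
theorem stmt15 (p : ℕ) [Fact p.Prime] (E : Set ℚ_[p])
    (hE : ∃ ε > (0:ℝ), ∀ x ∈ E, ∀ y ∈ E, x ≠ y → ε ≤ ‖x - y‖)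
    (nE : ℤ)
    (hnE : IsGreatest {v : ℤ | ∃ x ∈ E, ∃ y ∈ E, x ≠ y ∧ (x - y).valuation = v} nE) :
    ∀ ξ : ℚ_[p], IsZeroOfFourierMu p E ξ → ‖ξ‖ ≤ (p : ℝ) ^ (nE + 1) := by
  classical
  intro ξ hξ
  have hpp : p.Prime := Fact.out
  have hp1 : (1:ℝ) < p := by exact_mod_cast hpp.one_lt
  have hppos : (0:ℝ) < p := by positivity
  have hzp : ∀ z : ℤ, (0:ℝ) < (p:ℝ)^z := fun z => zpow_pos hppos z
  by_cases hξ0 : ξ = 0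
  · rw [hξ0, norm_zero]; positivity
  obtain ⟨n₀, H⟩ := hξ
  obtain ⟨l₀, hl₀E, y₀, hy₀E, hxy₀, hval₀⟩ := hnE.1
  obtain ⟨ε, hε, hEsep⟩ := hE
  -- parameters
  have hm : ∃ m : ℤ, ‖l₀‖ ≤ (p:ℝ)^m := by
    by_cases h : l₀ = 0
    · exact ⟨0, by simp [h]⟩
    · exact ⟨-l₀.valuation, le_of_eq (Padic.norm_eq_zpow_neg_valuation h)⟩
  obtain ⟨m, hml⟩ := hm
  set n : ℤ := min n₀ (-m) with hn
  have hnn₀ : n ≤ n₀ := min_le_left _ _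
  set k : ℕ := (n₀ - n).toNat with hk
  have hkn : (n₀ : ℤ) - n ≤ (k : ℤ) := Int.self_le_toNat _
  set δ : ℚ_[p] := (p:ℚ_[p])^(-n₀ : ℤ) with hδ
  have hδnorm : ‖δ‖ = (p:ℝ)^(n₀:ℤ) := by
    rw [hδ, Padic.norm_p_zpow]; norm_num
  have hSfin : (E ∩ {x : ℚ_[p] | ‖x‖ ≤ (p:ℝ)^(-n)}).Finite := finite_sep_inter E hε hEsep _
  haveI hFT : Fintype ↥(E ∩ {x : ℚ_[p] | ‖x‖ ≤ (p:ℝ)^(-n)}) := hSfin.fintype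
  set T : Finset ℚ_[p] := (E ∩ {x : ℚ_[p] | ‖x‖ ≤ (p:ℝ)^(-n)}).toFinset with hT
  have hmemT : ∀ l, l ∈ T ↔ l ∈ E ∧ ‖l‖ ≤ (p:ℝ)^(-n) := by
    intro l
    rw [hT, Set.mem_toFinset]
    exact Iff.rfl
  have hl₀n : ‖l₀‖ ≤ (p:ℝ)^(-n) := by
    refine le_trans hml (zpow_le_zpow_right₀ hp1.le ?_)
    omega
  have hl₀T : l₀ ∈ T := (hmemT l₀).mpr ⟨hl₀E, hl₀n⟩
  -- the per-t vanishing sums, as finite sums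
  have Ht : ∀ t : ℕ, ∑ l ∈ T, (stdChar p ((ξ + (t:ℚ_[p])*δ) * l))⁻¹ = 0 := by
    intro t
    have hyt : ‖(ξ + (t:ℚ_[p])*δ) - ξ‖ ≤ (p:ℝ)^n₀ := by
      rw [add_sub_cancel_left, norm_mul, hδnorm]
      have ht1 : ‖((t:ℚ_[p]))‖ ≤ 1 := by
        have := Padic.norm_int_le_one (p := p) (t : ℤ)
        push_cast at this
        exact this
      calc ‖(t:ℚ_[p])‖ * (p:ℝ)^(n₀:ℤ) ≤ 1 * (p:ℝ)^(n₀:ℤ) :=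
            mul_le_mul_of_nonneg_right ht1 (hzp n₀).le
        _ = (p:ℝ)^(n₀:ℤ) := one_mul _
    have h0 := H (ξ + (t:ℚ_[p])*δ) hyt n hnn₀
    rw [tsum_fintype] at h0
    calc ∑ l ∈ T, (stdChar p ((ξ + (t:ℚ_[p])*δ) * l))⁻¹
        = ∑ l : ↥(E ∩ {x : ℚ_[p] | ‖x‖ ≤ (p:ℝ)^(-n)}),
            (stdChar p ((ξ + (t:ℚ_[p])*δ) * l))⁻¹ := (Finset.sum_set_coe _).symm
      _ = 0 := h0
  -- distance bound inside T
  have hdistT : ∀ l ∈ T, ‖l₀ - l‖ ≤ (p:ℝ)^(-n) := by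
    intro l hl
    obtain ⟨-, hln⟩ := (hmemT l).mp hl
    calc ‖l₀ - l‖ = ‖l₀ + (-l)‖ := by ring_nf
      _ ≤ max ‖l₀‖ ‖-l‖ := Padic.nonarchimedean _ _
      _ ≤ (p:ℝ)^(-n) := max_le hl₀n (by rwa [norm_neg])
  -- geometric sums
  have hgeom : ∀ l ∈ T, ∑ t ∈ Finset.range (p^k), stdChar p ((t:ℚ_[p]) * (δ*(l₀ - l)))
      = if ‖l₀ - l‖ ≤ (p:ℝ)^(-n₀ : ℤ) then ((p^k : ℕ) : ℂ) else 0 := by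
    intro l hl
    have hsimp : ∀ t ∈ Finset.range (p^k), stdChar p ((t:ℚ_[p]) * (δ*(l₀ - l)))
        = (stdChar p (δ*(l₀-l)))^t := fun t _ => stdChar_nsmul t _
    rw [Finset.sum_congr rfl hsimp]
    have hnd : ‖δ*(l₀-l)‖ = (p:ℝ)^(n₀:ℤ) * ‖l₀ - l‖ := by
      rw [norm_mul, hδnorm]
    by_cases hcase : ‖l₀ - l‖ ≤ (p:ℝ)^(-n₀:ℤ)
    · rw [if_pos hcase]
      have h1 : stdChar p (δ*(l₀-l)) = 1 := by
        rw [stdChar_eq_one_iff, hnd]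
        calc (p:ℝ)^(n₀:ℤ) * ‖l₀ - l‖ ≤ (p:ℝ)^(n₀:ℤ) * (p:ℝ)^(-n₀:ℤ) :=
              mul_le_mul_of_nonneg_left hcase (hzp n₀).le
          _ = 1 := by rw [← zpow_add₀ (ne_of_gt hppos)]; norm_num
      rw [h1]
      simp
    · rw [if_neg hcase]
      have hu1 : stdChar p (δ*(l₀-l)) ≠ 1 := by
        rw [Ne, stdChar_eq_one_iff, hnd]
        intro hle
        apply hcase
        have := mul_le_mul_of_nonneg_left hle (hzp (-n₀)).le
        rw [← mul_assoc, ← zpow_add₀ (ne_of_gt hppos)] at this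
        simpa using this
      have hupk : (stdChar p (δ*(l₀-l)))^(p^k) = 1 := by
        rw [← stdChar_nsmul, stdChar_eq_one_iff, norm_mul, hnd]
        have hpkn : ‖((p^k : ℕ) : ℚ_[p])‖ = (p:ℝ)^(-(k:ℤ)) := by
          push_cast
          rw [Padic.norm_p_pow]
        rw [hpkn]
        calc (p:ℝ)^(-(k:ℤ)) * ((p:ℝ)^(n₀:ℤ) * ‖l₀ - l‖)
            ≤ (p:ℝ)^(-(k:ℤ)) * ((p:ℝ)^(n₀:ℤ) * (p:ℝ)^(-n)) := by
              apply mul_le_mul_of_nonneg_left _ (hzp _).le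
              exact mul_le_mul_of_nonneg_left (hdistT l hl) (hzp _).le
          _ = (p:ℝ)^(-(k:ℤ) + (n₀ + -n)) := by
              rw [← zpow_add₀ (ne_of_gt hppos), ← zpow_add₀ (ne_of_gt hppos)]
          _ ≤ 1 := by
              have h00 : (-(k:ℤ) + (n₀ + -n)) ≤ 0 := by omega
              calc (p:ℝ)^(-(k:ℤ) + (n₀ + -n)) ≤ (p:ℝ)^(0:ℤ) := zpow_le_zpow_right₀ hp1.le h00
                _ = 1 := zpow_zero _
      rw [geom_sum_eq hu1, hupk]
      simp
  -- main double sum identity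
  have hterm : ∀ (t : ℕ) (l : ℚ_[p]),
      stdChar p ((t:ℚ_[p])*δ*l₀) * (stdChar p ((ξ + (t:ℚ_[p])*δ) * l))⁻¹
      = stdChar p (-(ξ*l)) * stdChar p ((t:ℚ_[p]) * (δ*(l₀-l))) := by
    intro t l
    rw [← stdChar_neg, ← stdChar_add, ← stdChar_add]
    congr 1
    ring
  have hA : ∑ l ∈ T, stdChar p (-(ξ * l)) *
      (if ‖l₀ - l‖ ≤ (p:ℝ)^(-n₀:ℤ) then ((p^k : ℕ) : ℂ) else 0) = 0 := by
    have e1 : (0:ℂ) = ∑ t ∈ Finset.range (p^k),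
        stdChar p ((t:ℚ_[p])*δ*l₀) * ∑ l ∈ T, (stdChar p ((ξ + (t:ℚ_[p])*δ) * l))⁻¹ := by
      rw [Finset.sum_congr rfl (fun t _ => by rw [Ht t, mul_zero])]
      simp
    calc ∑ l ∈ T, stdChar p (-(ξ * l)) *
          (if ‖l₀ - l‖ ≤ (p:ℝ)^(-n₀:ℤ) then ((p^k : ℕ) : ℂ) else 0)
        = ∑ l ∈ T, stdChar p (-(ξ * l)) *
            ∑ t ∈ Finset.range (p^k), stdChar p ((t:ℚ_[p]) * (δ*(l₀ - l))) := by
          exact Finset.sum_congr rfl (fun l hl => by rw [hgeom l hl])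
      _ = ∑ l ∈ T, ∑ t ∈ Finset.range (p^k),
            stdChar p (-(ξ * l)) * stdChar p ((t:ℚ_[p]) * (δ*(l₀ - l))) := by
          exact Finset.sum_congr rfl (fun l _ => Finset.mul_sum _ _ _)
      _ = ∑ t ∈ Finset.range (p^k), ∑ l ∈ T,
            stdChar p (-(ξ * l)) * stdChar p ((t:ℚ_[p]) * (δ*(l₀ - l))) := Finset.sum_comm
      _ = ∑ t ∈ Finset.range (p^k), ∑ l ∈ T,
            stdChar p ((t:ℚ_[p])*δ*l₀) * (stdChar p ((ξ + (t:ℚ_[p])*δ) * l))⁻¹ := by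
          exact Finset.sum_congr rfl (fun t _ => Finset.sum_congr rfl
            (fun l _ => (hterm t l).symm))
      _ = ∑ t ∈ Finset.range (p^k),
            stdChar p ((t:ℚ_[p])*δ*l₀) * ∑ l ∈ T, (stdChar p ((ξ + (t:ℚ_[p])*δ) * l))⁻¹ := by
          exact Finset.sum_congr rfl (fun t _ => (Finset.mul_sum _ _ _).symm)
      _ = 0 := e1.symm
  -- extract filtered sum
  set T' : Finset ℚ_[p] := T.filter (fun l => ‖l₀ - l‖ ≤ (p:ℝ)^(-n₀:ℤ)) with hT'
  have hpk0 : ((p^k : ℕ) : ℂ) ≠ 0 := by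
    exact_mod_cast pow_ne_zero k (Nat.cast_ne_zero.mpr hpp.ne_zero)
  have hT'sum : ∑ l ∈ T', stdChar p (-(ξ * l)) = 0 := by
    have e2 : ∑ l ∈ T, stdChar p (-(ξ * l)) *
        (if ‖l₀ - l‖ ≤ (p:ℝ)^(-n₀:ℤ) then ((p^k : ℕ) : ℂ) else 0)
        = (∑ l ∈ T', stdChar p (-(ξ * l))) * ((p^k : ℕ) : ℂ) := by
      rw [hT', Finset.sum_mul, Finset.sum_filter]
      exact Finset.sum_congr rfl (fun l _ => by rw [mul_ite, mul_zero])
    rw [e2] at hA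
    exact (mul_eq_zero.mp hA).resolve_right hpk0
  have hl₀T' : l₀ ∈ T' := by
    rw [hT', Finset.mem_filter]
    exact ⟨hl₀T, by rw [sub_self, norm_zero]; exact (hzp (-n₀)).le⟩
  -- choose M and express character values as powers of ζ
  set M : ℕ := (max 1 (-ξ.valuation - n)).toNat with hM
  have hM1 : 1 ≤ M := by
    rw [hM]
    omega
  have hMb : -ξ.valuation - n ≤ (M:ℤ) := by
    rw [hM]
    have := Int.self_le_toNat (max 1 (-ξ.valuation - n))
    omega
  have hbound : ∀ l ∈ T', ‖-(ξ * l)‖ ≤ (p:ℝ)^(M:ℤ) := by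
    intro l hl
    have hlT : l ∈ T := (Finset.mem_filter.mp hl).1
    have hln : ‖l‖ ≤ (p:ℝ)^(-n) := ((hmemT l).mp hlT).2
    rw [norm_neg, norm_mul, Padic.norm_eq_zpow_neg_valuation hξ0]
    calc (p:ℝ)^(-ξ.valuation) * ‖l‖ ≤ (p:ℝ)^(-ξ.valuation) * (p:ℝ)^(-n) :=
          mul_le_mul_of_nonneg_left hln (hzp _).le
      _ = (p:ℝ)^(-ξ.valuation + -n) := (zpow_add₀ (ne_of_gt hppos) _ _).symm
      _ ≤ (p:ℝ)^(M:ℤ) := zpow_le_zpow_right₀ hp1.le (by omega)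
  set ζ : ℂ := Complex.exp (2 * Real.pi * Complex.I / ((p^M : ℕ) : ℂ)) with hζdef
  have hζprim : IsPrimitiveRoot ζ (p^M) :=
    Complex.isPrimitiveRoot_exp _ (pow_ne_zero M hpp.ne_zero)
  have hζN : ζ^(p^M) = 1 := hζprim.pow_eq_one
  set al : ℚ_[p] → ℕ := fun l =>
    if h : ∃ a : ℕ, a < p^M ∧ stdChar p (-(ξ*l)) = ζ^a then h.choose else 0 with hal
  have hal_spec : ∀ l ∈ T', al l < p^M ∧ stdChar p (-(ξ*l)) = ζ^(al l) := by
    intro l hl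
    have hex : ∃ a : ℕ, a < p^M ∧ stdChar p (-(ξ*l)) = ζ^a :=
      stdChar_eq_zeta_pow M (-(ξ*l)) (hbound l hl)
    rw [hal]
    simp only [dif_pos hex]
    exact hex.choose_spec
  set c : ℕ → ℕ := fun a => (T'.filter (fun l => al l = a)).card with hc
  have hcsum : ∑ a ∈ Finset.range (p^M), (c a : ℂ) * ζ^a = 0 := by
    calc ∑ a ∈ Finset.range (p^M), (c a : ℂ) * ζ^a
        = ∑ a ∈ Finset.range (p^M), ∑ l ∈ T'.filter (fun l => al l = a), ζ^(al l) := by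
          refine Finset.sum_congr rfl (fun a _ => ?_)
          rw [Finset.sum_congr rfl (fun l hl => by rw [(Finset.mem_filter.mp hl).2]),
            Finset.sum_const, hc, nsmul_eq_mul]
      _ = ∑ l ∈ T', ζ^(al l) :=
          Finset.sum_fiberwise_of_maps_to (fun l hl => Finset.mem_range.mpr (hal_spec l hl).1) _
      _ = ∑ l ∈ T', stdChar p (-(ξ*l)) :=
          Finset.sum_congr rfl (fun l hl => ((hal_spec l hl).2).symm)
      _ = 0 := hT'sum
  have hshift := count_shift M hM1 c hcsum
  -- find the partner point
  set k' : ℕ := p^(M-1) with hk'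
  have hk'pos : 0 < k' := pow_pos hpp.pos _
  have hpk' : k' * p = p^M := by
    rw [hk', ← pow_succ]
    congr 1
    omega
  set a₀ : ℕ := al l₀ with ha₀
  have ha₀spec := hal_spec l₀ hl₀T'
  set q₀ : ℕ := a₀ / k' with hq₀
  set r₀ : ℕ := a₀ % k' with hr₀
  have ha₀eq : q₀ * k' + r₀ = a₀ := by
    rw [hq₀, hr₀, mul_comm]
    exact Nat.div_add_mod a₀ k'
  have hq₀p : q₀ < p := by
    rw [hq₀]
    rw [Nat.div_lt_iff_lt_mul hk'pos]
    calc a₀ < p^M := ha₀spec.1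
      _ = p * k' := by rw [← hpk']; ring
  have hr₀k : r₀ < k' := Nat.mod_lt _ hk'pos
  set q₁ : ℕ := (q₀ + 1) % p with hq₁
  have hq₁p : q₁ < p := Nat.mod_lt _ hpp.pos
  have hq₁ne : q₁ ≠ q₀ := by
    rw [hq₁]
    rcases Nat.lt_or_ge (q₀ + 1) p with h | h
    · rw [Nat.mod_eq_of_lt h]
      omega
    · have hq₀1 : q₀ + 1 = p := by omega
      rw [hq₀1, Nat.mod_self]
      have := hpp.two_le
      omega
  set a₁ : ℕ := q₁ * k' + r₀ with ha₁
  have ha₁lt : a₁ < p^M := by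
    rw [ha₁, ← hpk']
    calc q₁ * k' + r₀ < q₁ * k' + k' := by omega
      _ = (q₁ + 1) * k' := by ring
      _ ≤ p * k' := Nat.mul_le_mul_right k' (by omega)
      _ = k' * p := by ring
  have hcq₁ : 0 < c a₁ := by
    have := hshift q₁ hq₁p q₀ hq₀p r₀ hr₀k
    rw [ha₁, this, ha₀eq, hc]
    apply Finset.card_pos.mpr
    exact ⟨l₀, Finset.mem_filter.mpr ⟨hl₀T', rfl⟩⟩
  have hcq₁' : (T'.filter (fun l => al l = a₁)).Nonempty := by
    rw [← Finset.card_pos]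
    exact hcq₁
  obtain ⟨l', hl'mem⟩ := hcq₁'
  have hl'T' : l' ∈ T' := (Finset.mem_filter.mp hl'mem).1
  have hl'al : al l' = a₁ := (Finset.mem_filter.mp hl'mem).2
  have hl'spec := hal_spec l' hl'T'
  have hχl₀ : stdChar p (-(ξ*l₀)) = ζ^a₀ := ha₀spec.2
  have hχl' : stdChar p (-(ξ*l')) = ζ^a₁ := by rw [hl'spec.2, hl'al]
  -- the ratio w
  set w : ℂ := stdChar p (ξ * (l₀ - l')) with hw
  have hwval : w * ζ^a₀ = ζ^a₁ := by
    rw [hw, ← hχl₀, ← hχl', ← stdChar_add]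
    congr 1
    ring
  have hζ0 : ζ ≠ 0 := Complex.exp_ne_zero _
  have hwne : w ≠ 1 := by
    intro h
    rw [h, one_mul] at hwval
    have heq := hζprim.pow_inj ha₀spec.1 ha₁lt hwval
    rw [← ha₀, ← ha₀eq, ha₁] at heq
    have hqq : q₀ = q₁ := by
      have := Nat.add_right_cancel heq
      exact Nat.eq_of_mul_eq_mul_right hk'pos this
    exact hq₁ne hqq.symm
  have hwp : w^p = 1 := by
    have hzz : ∀ q r : ℕ, ζ^((q*k'+r)*p) = ζ^(r*p) := by
      intro q r
      have h1 : ζ ^ (q * (k'*p)) = 1 := by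
        rw [mul_comm q, pow_mul, hpk', hζN, one_pow]
      calc ζ^((q*k'+r)*p) = ζ^(q*(k'*p)) * ζ^(r*p) := by
            rw [← pow_add]; congr 1; ring
        _ = ζ^(r*p) := by rw [h1, one_mul]
    have h1 : (ζ^a₁)^p = (ζ^a₀)^p := by
      rw [← pow_mul, ← pow_mul, ha₁, ← ha₀eq, hzz, hzz]
    have h2 : w^p * (ζ^a₀)^p = (ζ^a₀)^p := by
      rw [← mul_pow, hwval, h1]
    have hz0 : (ζ^a₀)^p ≠ 0 := pow_ne_zero _ (pow_ne_zero _ hζ0)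
    field_simp at h2
    exact h2
  -- conclude
  have hne : l₀ ≠ l' := by
    intro h
    apply hwne
    rw [hw, h, sub_self, mul_zero, stdChar_zero]
  have hnorm1 : ‖(p:ℚ_[p]) * (ξ * (l₀ - l'))‖ ≤ 1 := by
    rw [← stdChar_eq_one_iff]
    have : stdChar p ((p:ℚ_[p]) * (ξ * (l₀ - l'))) = w^p := by
      rw [hw, ← stdChar_nsmul]
    rw [this, hwp]
  have hl'E : l' ∈ E := ((hmemT l').mp (Finset.mem_filter.mp hl'T').1).1
  have hsub0 : l₀ - l' ≠ 0 := sub_ne_zero.mpr hne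
  have hvle : (l₀ - l').valuation ≤ nE := hnE.2 ⟨l₀, hl₀E, l', hl'E, hne, rfl⟩
  rw [norm_mul, norm_mul, Padic.norm_p, Padic.norm_eq_zpow_neg_valuation hsub0] at hnorm1
  set v : ℤ := (l₀ - l').valuation with hv
  have hstep : ‖ξ‖ ≤ (p:ℝ)^(v+1) := by
    have hd : (p:ℝ)⁻¹ * (‖ξ‖ * (p:ℝ)^(-v)) = ‖ξ‖ / (p:ℝ)^(v+1) := by
      rw [zpow_add₀ (ne_of_gt hppos), zpow_one, zpow_neg, div_eq_mul_inv, mul_inv]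
      ring
    rw [hd, div_le_one (hzp _)] at hnorm1
    exact hnorm1
  calc ‖ξ‖ ≤ (p:ℝ)^(v+1) := hstep
    _ ≤ (p:ℝ)^(nE+1) := zpow_le_zpow_right₀ hp1.le (by omega)
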